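/- Let v_r ≥ 0, v_f ≥ 0, ρ ≥ 0, a_max,accel ≥ 0, and 0 < a_min,brake ≤ a_max,brake be real numbers, and let a_f be a real number with 0 < a_f ≤ a_max,brake. Define the rear-car position x_r: ℝ≥0 → ℝ by x_r(t) = v_r·t + (1/2)·a_max,accel·t² for 0 ≤ t ≤ ρ, then x_r(t) = x_r(ρ) + v_ρ·(t − ρ) − (1/2)·a_min,brake·(t − ρ)² for ρ ≤ t ≤ ρ + v_ρ/a_min,brake where v_ρ = v_r + ρ·a_max,accel, and x_r constant thereafter; define the front-car position x_f: ℝ≥0 → ℝ by x_f(t) = d + v_f·t − (1/2)·a_f·t² for 0 ≤ t ≤ v_f/a_f and x_f(t) = d + v_f²/(2·a_f) thereafter. If d ≥ d_lon_min = max(v_r·ρ + (1/2)·ρ²·a_max,accel + v_ρ²/(2·a_min,brake) − v_f²/(2·a_max,brake), 0), then x_r(t) ≤ x_f(t) for all t ≥ 0; that is, no longitudinal collision occurs at any time. -/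
import Mathlib


open NNReal

/-- Worst-case rear-car position: initial velocity `vr`, acceleration `aacc` during
the response phase `[0, ρ]`, then braking at rate `aminb` until stopped. -/
noncomputable def rearPos (vr ρ aacc aminb : ℝ) (t : ℝ≥0) : ℝ :=
  if (t : ℝ) ≤ ρ then vr * (t : ℝ) + (1/2) * aacc * (t : ℝ)^2
  else if (t : ℝ) ≤ ρ + (vr + ρ * aacc) / aminb then
    (vr * ρ + (1/2) * aacc * ρ^2) + (vr + ρ * aacc) * ((t : ℝ) - ρ)
      - (1/2) * aminb * ((t : ℝ) - ρ)^2
  else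
    (vr * ρ + (1/2) * aacc * ρ^2) + (vr + ρ * aacc) * ((vr + ρ * aacc) / aminb)
      - (1/2) * aminb * ((vr + ρ * aacc) / aminb)^2

/-- Front-car position: starting at gap `d` with velocity `vf`, braking at constant
rate `af` until stopped. -/
noncomputable def frontPos (d vf af : ℝ) (t : ℝ≥0) : ℝ :=
  if (t : ℝ) ≤ vf / af then d + vf * (t : ℝ) - (1/2) * af * (t : ℝ)^2
  else d + vf^2 / (2 * af)

/-- If at the current time the (braking-phase) rear car is no faster than the
worst-case front car, then the rear car is behind the worst-case front car. -/
private lemma chase (vr ρ aacc b B vf s : ℝ) (hρ : 0 ≤ ρ) (hu : 0 ≤ s - ρ)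
    (hacc : 0 ≤ aacc) (hB0 : 0 ≤ B) (hbB : b ≤ B)
    (hδ : (vr + ρ * aacc) - b * (s - ρ) ≤ vf - B * s) :
    (vr * ρ + (1/2) * aacc * ρ^2) + (vr + ρ * aacc) * (s - ρ)
      - (1/2) * b * (s - ρ)^2 ≤ vf * s - (1/2) * B * s^2 := by
  have p1 : 0 ≤ ρ * (((vf - B*s) - ((vr + ρ * aacc) - b*(s-ρ))) + (B - b) * (s - ρ)) := by
    have h1 : 0 ≤ (B - b) * (s - ρ) := mul_nonneg (by linarith) hu
    exact mul_nonneg hρ (by linarith)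
  have p2 : 0 ≤ (B + aacc) * ρ^2 := by positivity
  have p3 : 0 ≤ (s - ρ) * ((vf - B*s) - ((vr + ρ * aacc) - b*(s-ρ))) :=
    mul_nonneg hu (by linarith)
  have p4 : 0 ≤ (B - b) * (s - ρ)^2 := mul_nonneg (by linarith) (sq_nonneg _)
  linarith only [p1, p2, p3, p4]

/-- Lower bound for the front car: it is always at least `d` plus the worst-case
front trajectory braking at the maximal rate `B`. -/
private lemma front_lb (d vf af B s : ℝ) (hvf : 0 ≤ vf) (haf : 0 < af)
    (hB : af ≤ B) (hs : 0 ≤ s) :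
    d + (if s ≤ vf / B then vf * s - (1/2) * B * s^2 else vf^2 / (2*B)) ≤
    (if s ≤ vf / af then d + vf * s - (1/2) * af * s^2 else d + vf^2 / (2*af)) := by
  have hB0 : 0 < B := lt_of_lt_of_le haf hB
  split_ifs with h1 h2 h2
  · nlinarith [sq_nonneg s]
  · -- s ≤ vf/B but s > vf/af : impossible
    exfalso
    have : vf / B ≤ vf / af := div_le_div_of_nonneg_left hvf haf hB
    exact h2 (le_trans h1 this)
  · -- vf/B < s ≤ vf/af
    have h3 : vf < B * s := by
      rw [not_le] at h1
      calc vf = B * (vf / B) := by field_simp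
        _ < B * s := mul_lt_mul_of_pos_left h1 hB0
    have h4 : af * s ≤ vf := by
      have := mul_le_mul_of_nonneg_left h2 (le_of_lt haf)
      calc af * s ≤ af * (vf / af) := this
        _ = vf := by field_simp
    have key : vf^2 / (2*B) ≤ vf * s - (1/2) * af * s^2 := by
      rw [div_le_iff₀ (by positivity : (0:ℝ) < 2*B)]
      nlinarith [mul_nonneg (mul_nonneg hB0.le hs) (sub_nonneg.mpr h4),
        mul_nonneg (sub_nonneg.mpr h3.le) hvf]
    linarith
  · have : vf^2 / (2*B) ≤ vf^2 / (2*af) :=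
      div_le_div_of_nonneg_left (by positivity) (by positivity) (by linarith)
    linarith

set_option maxHeartbeats 1000000 in
/-- Upper bound for the rear car: it never exceeds `M + W(s)` where `W` is the
worst-case front trajectory braking at rate `B` and `M` is the RSS max term. -/
private lemma rear_ub (vr ρ aacc b B vf s : ℝ) (hvr : 0 ≤ vr) (hvf : 0 ≤ vf)
    (hρ : 0 ≤ ρ) (hacc : 0 ≤ aacc) (hb : 0 < b) (hbB : b ≤ B) (hs : 0 ≤ s) :
    (if s ≤ ρ then vr * s + (1/2) * aacc * s^2
     else if s ≤ ρ + (vr + ρ * aacc) / b then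
       (vr * ρ + (1/2) * aacc * ρ^2) + (vr + ρ * aacc) * (s - ρ)
         - (1/2) * b * (s - ρ)^2
     else
       (vr * ρ + (1/2) * aacc * ρ^2) + (vr + ρ * aacc) * ((vr + ρ * aacc) / b)
         - (1/2) * b * ((vr + ρ * aacc) / b)^2)
    ≤ max (vr * ρ + (1/2) * ρ^2 * aacc
        + (vr + ρ * aacc)^2 / (2 * b) - vf^2 / (2 * B)) 0
      + (if s ≤ vf / B then vf * s - (1/2) * B * s^2 else vf^2 / (2*B)) := by
  have hB : 0 < B := lt_of_lt_of_le hb hbB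
  have hvρ : 0 ≤ vr + ρ * aacc := by positivity
  have hM0 : (0:ℝ) ≤ max (vr * ρ + (1/2) * ρ^2 * aacc
      + (vr + ρ * aacc)^2 / (2 * b) - vf^2 / (2 * B)) 0 := le_max_right _ _
  have hM1 : vr * ρ + (1/2) * ρ^2 * aacc + (vr + ρ * aacc)^2 / (2 * b)
      - vf^2 / (2 * B) ≤ max (vr * ρ + (1/2) * ρ^2 * aacc
      + (vr + ρ * aacc)^2 / (2 * b) - vf^2 / (2 * B)) 0 := le_max_left _ _
  have hvρb : (0:ℝ) ≤ (vr + ρ * aacc)^2 / (2*b) := by positivity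
  split_ifs with h1 h2 h2 h3 h3
  · -- phase A (s ≤ ρ), worst front moving (s ≤ vf/B)
    have hw : 0 ≤ vf - B * s := by
      have := mul_le_mul_of_nonneg_left h2 (le_of_lt hB)
      rw [mul_div_cancel₀ vf (ne_of_gt hB)] at this
      linarith
    have hrem : vr * s + (1/2) * aacc * s^2 ≤ vr * ρ + (1/2) * aacc * ρ^2 := by
      have p1 : 0 ≤ (ρ - s) * vr := mul_nonneg (by linarith) hvr
      have p2 : 0 ≤ ((ρ - s) * aacc) * (ρ + s) :=
        mul_nonneg (mul_nonneg (by linarith) hacc) (by linarith)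
      linarith only [p1, p2]
    rcases le_or_gt (vf - B * s) (vr + aacc * s) with hvel | hvel
    · -- rear at least as fast as worst front: distance-to-stop comparison
      have h5 : vf - B * s ≤ vr + ρ * aacc := by
        have : aacc * s ≤ aacc * ρ := mul_le_mul_of_nonneg_left h1 hacc
        linarith [mul_comm ρ aacc]
      have h6 : (vf - B*s)^2 ≤ (vr + ρ * aacc)^2 := by
        rw [sq, sq]; exact mul_self_le_mul_self hw h5
      have key : (vf - B*s)^2 / (2*B) ≤ (vr + ρ * aacc)^2 / (2*b) := by
        rw [div_le_div_iff₀ (by positivity) (by positivity)]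
        have h7 : (vr + ρ * aacc)^2 * b ≤ (vr + ρ * aacc)^2 * B :=
          mul_le_mul_of_nonneg_left hbB (sq_nonneg _)
        have h8 : (vf - B*s)^2 * b ≤ (vr + ρ * aacc)^2 * b :=
          mul_le_mul_of_nonneg_right h6 hb.le
        linarith only [h7, h8]
      have hWid : vf * s - (1/2) * B * s^2 = vf^2/(2*B) - (vf - B*s)^2/(2*B) := by
        field_simp; ring
      linarith
    · -- worst front strictly faster: rear behind worst front, use M ≥ 0
      have p1 : 0 ≤ s * ((vf - B*s) - (vr + aacc * s)) := mul_nonneg hs (by linarith)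
      have p2 : 0 ≤ B * s^2 := by positivity
      have p3 : 0 ≤ aacc * s^2 := by positivity
      linarith
  · -- phase A, worst front stopped
    have hrem : vr * s + (1/2) * aacc * s^2 ≤ vr * ρ + (1/2) * aacc * ρ^2 := by
      have p1 : 0 ≤ (ρ - s) * vr := mul_nonneg (by linarith) hvr
      have p2 : 0 ≤ ((ρ - s) * aacc) * (ρ + s) :=
        mul_nonneg (mul_nonneg (by linarith) hacc) (by linarith)
      linarith only [p1, p2]
    linarith
  · -- phase B (ρ < s ≤ T), worst front moving
    rw [not_le] at h1
    have hu : 0 ≤ s - ρ := by linarith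
    have hA : 0 ≤ (vr + ρ * aacc) - b * (s - ρ) := by
      have := mul_le_mul_of_nonneg_left
        (by linarith : s - ρ ≤ (vr + ρ * aacc) / b) (le_of_lt hb)
      rw [mul_div_cancel₀ _ (ne_of_gt hb)] at this
      linarith
    have hw : 0 ≤ vf - B * s := by
      have := mul_le_mul_of_nonneg_left h3 (le_of_lt hB)
      rw [mul_div_cancel₀ vf (ne_of_gt hB)] at this
      linarith
    have hWid : vf * s - (1/2) * B * s^2 = vf^2/(2*B) - (vf - B*s)^2/(2*B) := by
      field_simp; ring
    have hRid : (vr + ρ * aacc) * (s - ρ) - (1/2) * b * (s-ρ)^2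
        = (vr + ρ * aacc)^2/(2*b) - ((vr + ρ * aacc) - b*(s-ρ))^2/(2*b) := by
      field_simp; ring
    rcases le_or_gt (vf - B * s) ((vr + ρ * aacc) - b * (s - ρ)) with hvel | hvel
    · have h6 : (vf - B*s)^2 ≤ ((vr + ρ * aacc) - b*(s-ρ))^2 := by
        rw [sq, sq]; exact mul_self_le_mul_self hw hvel
      have key : (vf - B*s)^2 / (2*B) ≤ ((vr + ρ * aacc) - b*(s-ρ))^2 / (2*b) := by
        rw [div_le_div_iff₀ (by positivity) (by positivity)]
        have h7 : ((vr + ρ * aacc) - b*(s-ρ))^2 * b ≤ ((vr + ρ * aacc) - b*(s-ρ))^2 * B :=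
          mul_le_mul_of_nonneg_left hbB (sq_nonneg _)
        have h8 : (vf - B*s)^2 * b ≤ ((vr + ρ * aacc) - b*(s-ρ))^2 * b :=
          mul_le_mul_of_nonneg_right h6 hb.le
        linarith only [h7, h8]
      linarith
    · -- worst front faster at time s: rear ≤ worst front position, use M ≥ 0
      have key := chase vr ρ aacc b B vf s hρ hu hacc hB.le hbB (by linarith)
      linarith
  · -- phase B, worst front stopped
    have hRid : (vr + ρ * aacc) * (s - ρ) - (1/2) * b * (s-ρ)^2
        = (vr + ρ * aacc)^2/(2*b) - ((vr + ρ * aacc) - b*(s-ρ))^2/(2*b) := by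
      field_simp; ring
    have hA2 : (0:ℝ) ≤ ((vr + ρ * aacc) - b*(s-ρ))^2/(2*b) := by positivity
    linarith
  · -- phase C (s > T), worst front moving
    rw [not_le] at h1 h2
    have hRid : (vr + ρ * aacc) * ((vr + ρ * aacc) / b)
        - (1/2) * b * ((vr + ρ * aacc)/b)^2 = (vr + ρ * aacc)^2/(2*b) := by
      field_simp; ring
    have hw : 0 ≤ vf - B * s := by
      have := mul_le_mul_of_nonneg_left h3 (le_of_lt hB)
      rw [mul_div_cancel₀ vf (ne_of_gt hB)] at this
      linarith
    have hu : 0 ≤ (vr + ρ * aacc) / b := by positivity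
    have hbT : b * ((ρ + (vr + ρ * aacc) / b) - ρ) = vr + ρ * aacc := by
      field_simp
      ring
    have hwT : 0 ≤ vf - B * (ρ + (vr + ρ * aacc) / b) := by nlinarith
    have key1 := chase vr ρ aacc b B vf (ρ + (vr + ρ * aacc) / b) hρ
      (by linarith) hacc hB.le hbB (by rw [hbT]; linarith)
    have hid : (vr + ρ * aacc) * ((ρ + (vr + ρ * aacc) / b) - ρ)
        - (1/2) * b * ((ρ + (vr + ρ * aacc) / b) - ρ)^2
        = (vr + ρ * aacc)^2/(2*b) := by
      field_simp; ring
    -- key1 : rear total ≤ worst front at the rear stopping time T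
    have key2 : vf * (ρ + (vr + ρ * aacc) / b)
        - (1/2) * B * (ρ + (vr + ρ * aacc) / b)^2 ≤ vf * s - (1/2) * B * s^2 := by
      have q1 : 0 ≤ (s - (ρ + (vr + ρ * aacc) / b)) * (vf - B * s) :=
        mul_nonneg (by linarith) hw
      have q2 : 0 ≤ B * (s - (ρ + (vr + ρ * aacc) / b))^2 := by positivity
      linarith only [q1, q2]
    linarith [key1, hid, key2]
  · -- phase C, worst front stopped
    have hRid : (vr + ρ * aacc) * ((vr + ρ * aacc) / b)
        - (1/2) * b * ((vr + ρ * aacc)/b)^2 = (vr + ρ * aacc)^2/(2*b) := by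
      field_simp; ring
    linarith

set_option maxHeartbeats 1000000 in
theorem no_longitudinal_collision (vr vf ρ aacc aminb amaxb af d : ℝ)
    (hvr : 0 ≤ vr) (hvf : 0 ≤ vf) (hρ : 0 ≤ ρ) (hacc : 0 ≤ aacc)
    (hminb : 0 < aminb) (hbb : aminb ≤ amaxb)
    (haf : 0 < af) (haf' : af ≤ amaxb)
    (hd : d ≥ max (vr * ρ + (1/2) * ρ^2 * aacc
        + (vr + ρ * aacc)^2 / (2 * aminb) - vf^2 / (2 * amaxb)) 0) :
    ∀ t : ℝ≥0, rearPos vr ρ aacc aminb t ≤ frontPos d vf af t := by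
  intro t
  have hs : (0:ℝ) ≤ (t:ℝ) := t.coe_nonneg
  have h1 := rear_ub vr ρ aacc aminb amaxb vf (t:ℝ) hvr hvf hρ hacc hminb hbb hs
  have h2 := front_lb d vf af amaxb (t:ℝ) hvf haf haf' hs
  have h3 : max (vr * ρ + (1/2) * ρ^2 * aacc
        + (vr + ρ * aacc)^2 / (2 * aminb) - vf^2 / (2 * amaxb)) 0
      + (if (t:ℝ) ≤ vf / amaxb then vf * (t:ℝ) - (1/2) * amaxb * (t:ℝ)^2
          else vf^2 / (2*amaxb))
      ≤ d + (if (t:ℝ) ≤ vf / amaxb then vf * (t:ℝ) - (1/2) * amaxb * (t:ℝ)^2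
          else vf^2 / (2*amaxb)) := by linarith
  unfold rearPos frontPos
  exact le_trans h1 (le_trans h3 h2)
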